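/- Let a>0, β∈(0,1) and ε>0 with 0 < β−ε < β+ε < 1. Let Ω : ℝ^d → ℝ be homogeneous of degree 0 (Ω(tx) = Ω(x) for all t>0, x≠0) with ∫_{S^{d-1}} |Ω|^s dσ < ∞ for some s>1. Then there is a constant C = C(ε,β,d,a) such that for all f ∈ L¹_loc(γ) and all x ∈ ℝ^d: |I_{Ω,β}^a(f)(x)| ≤ C [M_{Ω,β+ε}^{2a}(f)(x)]^{1/2} · [M_{Ω,β−ε}^{2a}(f)(x)]^{1/2}. -/

import Mathlib

open MeasureTheory ENNReal Real Set Metric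
open scoped Classical

noncomputable section

/-- ℝ^d with the Euclidean norm. -/
abbrev Euc (d : ℕ) := EuclideanSpace ℝ (Fin d)

/-- The Gaussian measure dγ(x) = π^{-d/2} e^{-|x|²} dx. -/
def gaussMeasure (d : ℕ) : Measure (Euc d) :=
  volume.withDensity fun x => ENNReal.ofReal (Real.pi ^ (-(d : ℝ) / 2) * Real.exp (-‖x‖ ^ 2))

/-- m(x) = min(1, 1/|x|) (with value 1 at x = 0). -/
def adm {d : ℕ} (x : Euc d) : ℝ := if ‖x‖ ≤ 1 then 1 else ‖x‖⁻¹

/-- `B(c,r) ∈ 𝓑_a`: the admissibility condition for a ball of center `c` and radius `r`. -/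
def IsAdm {d : ℕ} (a : ℝ) (c : Euc d) (r : ℝ) : Prop := 0 < r ∧ r < a * adm c

/-- The surface measure σ on the unit sphere S^{d-1}. -/
def sphereMeasure (d : ℕ) : Measure (sphere (0 : Euc d) 1) :=
  (volume : Measure (Euc d)).toSphere

/-- The local fractional maximal operator with rough kernel Ω:
M_{Ω,β}^a(f)(x) = sup_{B∈𝓑_a(x)} γ(B)^{β-1} ∫_B |Ω(x-y)||f(y)| dγ(y). -/
def roughMax {d : ℕ} (a β : ℝ) (Ω f : Euc d → ℝ) (x : Euc d) : ℝ≥0∞ :=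
  ⨆ (c : Euc d) (r : ℝ) (_ : IsAdm a c r) (_ : x ∈ ball c r),
    (gaussMeasure d (ball c r)) ^ (β - 1) *
      ∫⁻ y in ball c r, ENNReal.ofReal |Ω (x - y)| * ENNReal.ofReal |f y| ∂gaussMeasure d

/-- The local fractional integral operator with rough kernel Ω:
I_{Ω,β}^a(f)(x) = ∫_{B(x,a m(x))} Ω(x-y) f(y) γ(B(x,|x-y|))^{β-1} dγ(y). -/
def roughIfrac {d : ℕ} (a β : ℝ) (Ω f : Euc d → ℝ) (x : Euc d) : ℝ :=
  ∫ y in ball x (a * adm x),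
    Ω (x - y) * f y * ((gaussMeasure d (ball x ‖x - y‖)).toReal) ^ (β - 1) ∂gaussMeasure d

/- ############ auxiliary lemmas ############ -/

lemma my_rpow_antitone {x y : ℝ≥0∞} {z : ℝ} (hxy : x ≤ y) (hz : z ≤ 0) : y ^ z ≤ x ^ z := by
  rw [← neg_neg z, ENNReal.rpow_neg y, ENNReal.rpow_neg x]
  exact ENNReal.inv_le_inv.2 (ENNReal.rpow_le_rpow hxy (neg_nonneg.2 hz))

lemma my_tsum_pow_dist (P : ℝ≥0∞) (hP : P ≤ 1) (n : ℕ) :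
    ∑' k : ℕ, P ^ (Nat.dist n k) ≤ 2 * (1 - P)⁻¹ := by
  have hsplit : ∑' k : ℕ, P ^ (Nat.dist n k) =
      (∑ k ∈ Finset.range n, P ^ (Nat.dist n k)) + ∑' j : ℕ, P ^ (Nat.dist n (j + n)) :=
    (Summable.sum_add_tsum_nat_add' (f := fun k => P ^ (Nat.dist n k)) (k := n) ENNReal.summable).symm
  have h2 : ∀ j : ℕ, Nat.dist n (j + n) = j := by
    intro j; simp [Nat.dist]
  have h3 : (∑ k ∈ Finset.range n, P ^ (Nat.dist n k)) ≤ ∑' j : ℕ, P ^ j := by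
    have hb : ∀ k ∈ Finset.range n, P ^ (Nat.dist n k) ≤ P ^ (n - 1 - k) := by
      intro k hk
      rw [Finset.mem_range] at hk
      have hd : Nat.dist n k = n - k := Nat.dist_eq_sub_of_le_right hk.le
      rw [hd]
      have he : n - k = (n - 1 - k) + 1 := by omega
      rw [he, pow_succ]
      exact le_trans (mul_le_mul_right hP _) (by rw [mul_one])
    calc (∑ k ∈ Finset.range n, P ^ (Nat.dist n k)) ≤ ∑ k ∈ Finset.range n, P ^ (n-1-k) :=
          Finset.sum_le_sum hb
      _ = ∑ k ∈ Finset.range n, P ^ k := Finset.sum_range_reflect (fun j => P ^ j) n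
      _ ≤ ∑' j : ℕ, P ^ j := ENNReal.sum_le_tsum _
  rw [hsplit]
  simp only [h2]
  calc (∑ k ∈ Finset.range n, P ^ (Nat.dist n k)) + ∑' j : ℕ, P ^ j
      ≤ (∑' j : ℕ, P ^ j) + ∑' j : ℕ, P ^ j := add_le_add_left h3 _
    _ = 2 * (1 - P)⁻¹ := by rw [ENNReal.tsum_geometric, two_mul]

lemma my_per_k (p A B : ℝ) (hp0 : 0 < p) (hp1 : p < 1) (hA : 0 < A) (hB : 0 < B) :
    ∃ n : ℕ, ∀ k : ℕ, min (A * (p ^ k)⁻¹) (B * p ^ k)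
      ≤ p⁻¹ * Real.sqrt (A * B) * p ^ Nat.dist n k := by
  set sa := Real.sqrt A with hsa_def
  set sb := Real.sqrt B with hsb_def
  have hsa : 0 < sa := Real.sqrt_pos.2 hA
  have hsb : 0 < sb := Real.sqrt_pos.2 hB
  have hA2 : sa ^ 2 = A := Real.sq_sqrt hA.le
  have hB2 : sb ^ 2 = B := Real.sq_sqrt hB.le
  have hAB : Real.sqrt (A * B) = sa * sb := Real.sqrt_mul hA.le B
  have hpinv : 1 < p⁻¹ := (one_lt_inv₀ hp0).2 hp1
  set t := sb / sa with ht_def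
  have ht : 0 < t := div_pos hsb hsa
  set n := ⌈Real.logb p⁻¹ t⌉₊ with hn_def
  have key1 : t ≤ (p⁻¹) ^ (n + 1) := by
    rcases le_or_gt t 1 with h1 | h1
    · exact h1.trans (one_le_pow₀ hpinv.le)
    · have hlog : Real.logb p⁻¹ t ≤ ((n + 1 : ℕ) : ℝ) := by
        calc Real.logb p⁻¹ t ≤ (n : ℝ) := Nat.le_ceil _
          _ ≤ ((n + 1 : ℕ) : ℝ) := by push_cast; linarith
      calc t = (p⁻¹) ^ Real.logb p⁻¹ t := (Real.rpow_logb (by positivity) (ne_of_gt hpinv) ht).symm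
        _ ≤ (p⁻¹) ^ (((n + 1 : ℕ) : ℝ)) := Real.rpow_le_rpow_of_exponent_le hpinv.le hlog
        _ = (p⁻¹) ^ (n + 1) := Real.rpow_natCast _ _
  have key2 : ∀ k, k < n → (p⁻¹) ^ (n - 1) ≤ t := by
    intro k hk
    have hlt : ((n - 1 : ℕ) : ℝ) < Real.logb p⁻¹ t := by
      have := Nat.lt_ceil.1 (show n - 1 < ⌈Real.logb p⁻¹ t⌉₊ by omega)
      exact this
    calc (p⁻¹) ^ (n - 1) = (p⁻¹) ^ (((n - 1 : ℕ) : ℝ)) := (Real.rpow_natCast _ _).symm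
      _ ≤ (p⁻¹) ^ Real.logb p⁻¹ t := Real.rpow_le_rpow_of_exponent_le hpinv.le hlt.le
      _ = t := Real.rpow_logb (by positivity) (ne_of_gt hpinv) ht
  refine ⟨n, fun k => ?_⟩
  rcases le_or_gt n k with hk | hk
  · have hdist : Nat.dist n k = k - n := Nat.dist_eq_sub_of_le hk
    have h1 : sb * p ^ (n + 1) ≤ sa := by
      have hthis := key1
      rw [ht_def, div_le_iff₀ hsa, inv_pow] at hthis
      have h2 : sb * p ^ (n+1) ≤ (p ^ (n+1))⁻¹ * sa * p ^ (n+1) :=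
        mul_le_mul_of_nonneg_right hthis (by positivity)
      calc sb * p ^ (n+1) ≤ (p ^ (n+1))⁻¹ * sa * p ^ (n+1) := h2
        _ = sa := by field_simp
    refine le_trans (min_le_right _ _) ?_
    rw [hdist, hAB]
    have hkk : p ^ (n+1) * p ^ (k - n) = p * p ^ k := by
      rw [← pow_add, ← pow_succ']
      congr 1
      omega
    rw [show p⁻¹ * (sa * sb) * p ^ (k - n) = (sa * (sb * p ^ (k-n))) / p by field_simp,
      le_div_iff₀ hp0]
    calc B * p ^ k * p = sb * p ^ (n+1) * (sb * p ^ (k-n)) := by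
          rw [show sb * p^(n+1) * (sb * p^(k-n)) = sb^2 * (p^(n+1) * p^(k-n)) from by ring, hkk,
            hB2]; ring
      _ ≤ sa * (sb * p ^ (k-n)) := mul_le_mul_of_nonneg_right h1 (by positivity)
  · have hdist : Nat.dist n k = n - k := Nat.dist_eq_sub_of_le_right hk.le
    have hn1 : 1 ≤ n := by omega
    have h4 : sa * p ≤ sb * p ^ n := by
      have h5 := key2 k hk
      rw [ht_def, inv_pow, le_div_iff₀ hsa] at h5
      have h6 : (p ^ (n-1))⁻¹ * sa * p ^ (n - 1) ≤ sb * p ^ (n-1) :=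
        mul_le_mul_of_nonneg_right h5 (by positivity)
      have h7 : sa ≤ sb * p ^ (n-1) := by
        calc sa = (p ^ (n-1))⁻¹ * sa * p ^ (n-1) := by field_simp
          _ ≤ sb * p ^ (n-1) := h6
      calc sa * p ≤ sb * p ^ (n-1) * p := mul_le_mul_of_nonneg_right h7 hp0.le
        _ = sb * p ^ n := by rw [mul_assoc, ← pow_succ]; congr 2; omega
    refine le_trans (min_le_left _ _) ?_
    rw [hdist, hAB]
    rw [show A * (p ^ k)⁻¹ = A / p ^ k from by ring,
      show p⁻¹ * (sa * sb) * p ^ (n - k) = (sa * sb * p ^ (n-k)) / p from by field_simp,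
      div_le_div_iff₀ (by positivity) hp0]
    have hnk : p ^ (n - k) * p ^ k = p ^ n := by rw [← pow_add]; congr 1; omega
    calc A * p = sa * (sa * p) := by rw [← hA2]; ring
      _ ≤ sa * (sb * p ^ n) := mul_le_mul_of_nonneg_left h4 hsa.le
      _ = sa * sb * p ^ (n-k) * p ^ k := by rw [mul_assoc (sa*sb), hnk]; ring

lemma my_adm_pos {d : ℕ} (x : Euc d) : 0 < adm x := by
  unfold adm
  split_ifs with h
  · exact one_pos
  · exact inv_pos.2 (lt_trans one_pos (not_le.1 h))

lemma my_adm_radius {d : ℕ} (a : ℝ) (x : Euc d) {r : ℝ} (hr : 0 < r)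
    (hra : r ≤ 2 * a * adm x) : r ≤ 2 * a ∧ r * ‖x‖ ≤ 2 * a := by
  unfold adm at hra
  split_ifs at hra with h
  · rw [mul_one] at hra
    refine ⟨hra, ?_⟩
    calc r * ‖x‖ ≤ r * 1 := mul_le_mul_of_nonneg_left h hr.le
      _ = r := mul_one r
      _ ≤ 2 * a := hra
  · push_neg at h
    have hx0 : 0 < ‖x‖ := lt_trans one_pos h
    have ha0 : 0 < 2 * a := by
      by_contra hcon
      push_neg at hcon
      have : 2 * a * ‖x‖⁻¹ ≤ 0 := mul_nonpos_of_nonpos_of_nonneg hcon (by positivity)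
      linarith
    constructor
    · calc r ≤ 2 * a * ‖x‖⁻¹ := hra
        _ ≤ 2 * a * 1 := mul_le_mul_of_nonneg_left (inv_le_one_of_one_le₀ h.le) ha0.le
        _ = 2 * a := mul_one _
    · have h2 := mul_le_mul_of_nonneg_right hra hx0.le
      rwa [mul_assoc, inv_mul_cancel₀ hx0.ne', mul_one] at h2

lemma my_gauss_comp {d : ℕ} (hd : 0 < d) (a : ℝ) (ha : 0 < a) :
    ∃ c₁ c₂ : ℝ, 0 < c₁ ∧ 0 < c₂ ∧ ∀ (x : Euc d) (r : ℝ), 0 < r → r ≤ 2 * a * adm x →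
      ENNReal.ofReal (c₁ * r ^ d * Real.exp (-‖x‖ ^ 2)) ≤ gaussMeasure d (ball x r) ∧
      gaussMeasure d (ball x r) ≤ ENNReal.ofReal (c₂ * r ^ d * Real.exp (-‖x‖ ^ 2)) := by
  haveI : NeZero d := ⟨hd.ne'⟩
  have hcπ0 : 0 < Real.pi ^ (-(d : ℝ) / 2) := Real.rpow_pos_of_pos Real.pi_pos _
  have hVtop : (volume : Measure (Euc d)) (ball (0 : Euc d) 1) ≠ ⊤ := measure_ball_lt_top.ne
  have hV0 : (volume : Measure (Euc d)) (ball (0 : Euc d) 1) ≠ 0 :=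
    (measure_ball_pos volume (0 : Euc d) one_pos).ne'
  set v : ℝ := ((volume : Measure (Euc d)) (ball (0 : Euc d) 1)).toReal with hv_def
  have hv : 0 < v := ENNReal.toReal_pos hV0 hVtop
  refine ⟨Real.pi ^ (-(d : ℝ) / 2) * Real.exp (-(4 * a + 4 * a ^ 2)) * v,
    Real.pi ^ (-(d : ℝ) / 2) * Real.exp (4 * a) * v, by positivity, by positivity, ?_⟩
  intro x r hr hra
  obtain ⟨h2a, hrx⟩ := my_adm_radius a x hr hra
  have hvol : (volume : Measure (Euc d)) (ball x r)
      = ENNReal.ofReal (r ^ d) * (volume : Measure (Euc d)) (ball (0 : Euc d) 1) := by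
    rw [Measure.addHaar_ball volume x hr.le, finrank_euclideanSpace_fin]
  have hγ : gaussMeasure d (ball x r)
      = ∫⁻ y in ball x r, ENNReal.ofReal (Real.pi ^ (-(d : ℝ) / 2) * Real.exp (-‖y‖ ^ 2)) ∂volume := by
    simp only [gaussMeasure]
    exact withDensity_apply _ measurableSet_ball
  have hub : ∀ y ∈ ball x r, ‖y‖ ^ 2 ≤ ‖x‖ ^ 2 + (4 * a + 4 * a ^ 2) := by
    intro y hy
    have h0 : dist y x < r := mem_ball.1 hy
    have h1 : ‖y‖ ≤ r + ‖x‖ := by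
      calc ‖y‖ = dist y 0 := (dist_zero_right y).symm
        _ ≤ dist y x + dist x 0 := dist_triangle y x 0
        _ ≤ r + ‖x‖ := by rw [dist_zero_right]; linarith
    have h2 : ‖y‖ ^ 2 ≤ (r + ‖x‖) ^ 2 := pow_le_pow_left₀ (norm_nonneg y) h1 2
    have h3 : r ^ 2 ≤ (2 * a) ^ 2 := pow_le_pow_left₀ hr.le h2a 2
    nlinarith [norm_nonneg x, norm_nonneg y]
  have hlb : ∀ y ∈ ball x r, ‖x‖ ^ 2 - 4 * a ≤ ‖y‖ ^ 2 := by
    intro y hy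
    have h0 : dist y x < r := mem_ball.1 hy
    have h1 : ‖x‖ ≤ ‖y‖ + r := by
      calc ‖x‖ = dist x 0 := (dist_zero_right x).symm
        _ ≤ dist x y + dist y 0 := dist_triangle x y 0
        _ ≤ ‖y‖ + r := by rw [dist_zero_right, dist_comm]; linarith
    rcases le_or_gt r ‖x‖ with hcase | hcase
    · have h2 : ‖x‖ - r ≤ ‖y‖ := by linarith
      have h3 : (‖x‖ - r) ^ 2 ≤ ‖y‖ ^ 2 := pow_le_pow_left₀ (by linarith) h2 2
      nlinarith [hr.le]
    · have h2 : ‖x‖ * ‖x‖ ≤ r * ‖x‖ := mul_le_mul_of_nonneg_right hcase.le (norm_nonneg x)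
      nlinarith [sq_nonneg ‖y‖]
  constructor
  · rw [hγ]
    have e1 : Real.pi ^ (-(d : ℝ) / 2) * Real.exp (-(4 * a + 4 * a ^ 2)) * v * r ^ d
        * Real.exp (-‖x‖ ^ 2)
        = (Real.pi ^ (-(d : ℝ) / 2) * (Real.exp (-(4 * a + 4 * a ^ 2)) * Real.exp (-‖x‖ ^ 2)))
          * (r ^ d * v) := by ring
    have e2 : ENNReal.ofReal (Real.pi ^ (-(d : ℝ) / 2) * Real.exp (-(4 * a + 4 * a ^ 2)) * v
        * r ^ d * Real.exp (-‖x‖ ^ 2))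
        = ENNReal.ofReal (Real.pi ^ (-(d : ℝ) / 2)
            * (Real.exp (-(4 * a + 4 * a ^ 2)) * Real.exp (-‖x‖ ^ 2)))
          * ((volume : Measure (Euc d)) (ball x r)) := by
      rw [e1, ENNReal.ofReal_mul (by positivity), hvol, ENNReal.ofReal_mul (pow_nonneg hr.le d),
        hv_def, ENNReal.ofReal_toReal hVtop]
    rw [e2]
    calc ENNReal.ofReal (Real.pi ^ (-(d : ℝ) / 2)
            * (Real.exp (-(4 * a + 4 * a ^ 2)) * Real.exp (-‖x‖ ^ 2)))
          * (volume : Measure (Euc d)) (ball x r)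
        = ∫⁻ _ in ball x r, ENNReal.ofReal (Real.pi ^ (-(d : ℝ) / 2)
            * (Real.exp (-(4 * a + 4 * a ^ 2)) * Real.exp (-‖x‖ ^ 2))) ∂volume :=
          (setLIntegral_const _ _).symm
      _ ≤ ∫⁻ y in ball x r, ENNReal.ofReal (Real.pi ^ (-(d : ℝ) / 2) * Real.exp (-‖y‖ ^ 2))
            ∂volume := by
          apply setLIntegral_mono' measurableSet_ball
          intro y hy
          apply ENNReal.ofReal_le_ofReal
          rw [← Real.exp_add]
          apply mul_le_mul_of_nonneg_left _ hcπ0.le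
          apply Real.exp_le_exp.2
          have := hub y hy
          linarith
  · rw [hγ]
    have e2 : ENNReal.ofReal (Real.pi ^ (-(d : ℝ) / 2) * Real.exp (4 * a) * v * r ^ d
        * Real.exp (-‖x‖ ^ 2))
        = ENNReal.ofReal (Real.pi ^ (-(d : ℝ) / 2) * (Real.exp (4 * a) * Real.exp (-‖x‖ ^ 2)))
          * ((volume : Measure (Euc d)) (ball x r)) := by
      rw [show Real.pi ^ (-(d : ℝ) / 2) * Real.exp (4 * a) * v * r ^ d * Real.exp (-‖x‖ ^ 2)
        = (Real.pi ^ (-(d : ℝ) / 2) * (Real.exp (4 * a) * Real.exp (-‖x‖ ^ 2))) * (r ^ d * v)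
        from by ring, ENNReal.ofReal_mul (by positivity), hvol,
        ENNReal.ofReal_mul (pow_nonneg hr.le d), hv_def, ENNReal.ofReal_toReal hVtop]
    rw [e2]
    calc ∫⁻ y in ball x r, ENNReal.ofReal (Real.pi ^ (-(d : ℝ) / 2) * Real.exp (-‖y‖ ^ 2)) ∂volume
        ≤ ∫⁻ _ in ball x r, ENNReal.ofReal (Real.pi ^ (-(d : ℝ) / 2)
            * (Real.exp (4 * a) * Real.exp (-‖x‖ ^ 2))) ∂volume := by
          apply setLIntegral_mono' measurableSet_ball
          intro y hy
          apply ENNReal.ofReal_le_ofReal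
          rw [← Real.exp_add]
          apply mul_le_mul_of_nonneg_left _ hcπ0.le
          apply Real.exp_le_exp.2
          have := hlb y hy
          linarith
      _ = _ := setLIntegral_const _ _

theorem stmt13 {d : ℕ} (hd : 0 < d) (a : ℝ) (ha : 0 < a)
    (β ε : ℝ) (hβ : β ∈ Ioo (0 : ℝ) 1) (hε : 0 < ε)
    (hβε : 0 < β - ε) (hβε' : β + ε < 1)
    (s : ℝ) (hs : 1 < s)
    (Ω : Euc d → ℝ) (hΩm : Measurable Ω)
    (hΩh : ∀ (t : ℝ) (x : Euc d), 0 < t → x ≠ 0 → Ω (t • x) = Ω x)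
    (hΩs : (∫⁻ z : sphere (0 : Euc d) 1,
        ENNReal.ofReal |Ω ↑z| ^ s ∂sphereMeasure d) < ⊤) :
    ∃ C : ℝ≥0∞, C ≠ ⊤ ∧ ∀ f : Euc d → ℝ, LocallyIntegrable f (gaussMeasure d) →
      ∀ x : Euc d,
        ENNReal.ofReal |roughIfrac a β Ω f x| ≤
          C * (roughMax (2 * a) (β + ε) Ω f x) ^ ((1 : ℝ) / 2) *
            (roughMax (2 * a) (β - ε) Ω f x) ^ ((1 : ℝ) / 2) := by
  haveI : NeZero d := ⟨hd.ne'⟩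
  obtain ⟨hβ0, hβ1⟩ := hβ
  obtain ⟨c₁, c₂, hc₁, hc₂, hcomp⟩ := my_gauss_comp hd a ha
  set q : ℝ := (2:ℝ)⁻¹ ^ d with hq_def
  have hq0 : 0 < q := by positivity
  have hq1 : q < 1 := pow_lt_one₀ (by norm_num) (by norm_num) hd.ne'
  set p : ℝ := q ^ ε with hp_def
  have hp0 : 0 < p := Real.rpow_pos_of_pos hq0 ε
  have hp1 : p < 1 := Real.rpow_lt_one hq0.le hq1 hε
  set G : ℝ := max (c₁ ^ (β-1) * q ^ (β-1) * c₂ ^ (1-(β+ε)))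
    (c₁ ^ (β-1) * q ^ (β-1) * c₂ ^ (1-(β-ε))) with hG_def
  have hG0 : 0 < G := lt_max_of_lt_left
    (mul_pos (mul_pos (Real.rpow_pos_of_pos hc₁ _) (Real.rpow_pos_of_pos hq0 _))
      (Real.rpow_pos_of_pos hc₂ _))
  set P : ℝ≥0∞ := ENNReal.ofReal p with hP_def
  have hP1 : P < 1 := by rw [hP_def]; exact ENNReal.ofReal_lt_one.2 hp1
  set C : ℝ≥0∞ := ENNReal.ofReal G * ENNReal.ofReal p⁻¹ * (2 * (1 - P)⁻¹) with hC_def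
  have hCtop : C ≠ ⊤ := by
    apply ENNReal.mul_ne_top (ENNReal.mul_ne_top ENNReal.ofReal_ne_top ENNReal.ofReal_ne_top)
    exact ENNReal.mul_ne_top (by norm_num) (ENNReal.inv_ne_top.2 (tsub_pos_of_lt hP1).ne')
  have hC0 : C ≠ 0 := by
    apply mul_ne_zero (mul_ne_zero (ENNReal.ofReal_pos.2 hG0).ne'
      (ENNReal.ofReal_pos.2 (by positivity)).ne')
    exact mul_ne_zero (by norm_num) (ENNReal.inv_ne_zero.2 (ENNReal.sub_ne_top one_ne_top))
  refine ⟨C, hCtop, fun f hf x => ?_⟩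
  have hadmx := my_adm_pos x
  set R : ℝ := a * adm x with hR_def
  have hR : 0 < R := mul_pos ha hadmx
  have hR2 : R ≤ 2 * a * adm x := by rw [hR_def]; nlinarith
  have hR2' : R < 2 * a * adm x := by rw [hR_def]; nlinarith
  set E : ℝ := Real.exp (-‖x‖ ^ 2) with hE_def
  have hE : 0 < E := Real.exp_pos _
  set r : ℕ → ℝ := fun k => R / 2 ^ k with hr_def
  have hrpos : ∀ k, 0 < r k := fun k => div_pos hR (by positivity)
  have hrle : ∀ k, r k ≤ R := fun k => by
    simp only [hr_def]
    exact div_le_self hR.le (one_le_pow₀ one_le_two)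
  have hradm : ∀ k, r k ≤ 2 * a * adm x := fun k => le_trans (hrle k) hR2
  have hrsucc : ∀ k, r (k+1) = r k / 2 := fun k => by
    simp only [hr_def, pow_succ, ← div_div]
  set t : ℕ → ℝ≥0∞ := fun k => gaussMeasure d (ball x (r k)) with ht_def
  have htlo : ∀ k, ENNReal.ofReal (c₁ * r k ^ d * E) ≤ t k :=
    fun k => (hcomp x (r k) (hrpos k) (hradm k)).1
  have hthi : ∀ k, t k ≤ ENNReal.ofReal (c₂ * r k ^ d * E) :=
    fun k => (hcomp x (r k) (hrpos k) (hradm k)).2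
  have ht0 : ∀ k, t k ≠ 0 := fun k =>
    (lt_of_lt_of_le (ENNReal.ofReal_pos.2
      (mul_pos (mul_pos hc₁ (pow_pos (hrpos k) d)) hE)) (htlo k)).ne'
  have httop : ∀ k, t k ≠ ⊤ := fun k => (lt_of_le_of_lt (hthi k) ENNReal.ofReal_lt_top).ne
  have htne : ∀ k, t k ^ (β - 1) ≠ ⊤ := by
    intro k hcon
    rcases ENNReal.rpow_eq_top_iff.1 hcon with ⟨h1, _⟩ | ⟨h1, _⟩
    exacts [ht0 k h1, httop k h1]
  set F : Euc d → ℝ≥0∞ := fun y => ENNReal.ofReal |Ω (x - y)| * ENNReal.ofReal |f y| with hF_def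
  set S : ℕ → ℝ≥0∞ := fun k => ∫⁻ y in ball x (r k), F y ∂gaussMeasure d with hS_def
  -- maximal function bound
  have hmax : ∀ δ : ℝ, ∀ k : ℕ, t k ^ (δ - 1) * S k ≤ roughMax (2*a) δ Ω f x := by
    intro δ k
    have hadm2 : IsAdm (2*a) x (r k) := ⟨hrpos k, lt_of_le_of_lt (hrle k) hR2'⟩
    have hmem : x ∈ ball x (r k) := mem_ball_self (hrpos k)
    unfold roughMax
    refine le_trans ?_ (le_iSup _ x)
    refine le_trans ?_ (le_iSup _ (r k))
    refine le_trans ?_ (le_iSup _ hadm2)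
    refine le_trans ?_ (le_iSup _ hmem)
    simp only [ht_def, hS_def, hF_def]
    exact le_rfl
  have hSle : ∀ (δ : ℝ) (k : ℕ), S k ≤ t k ^ (1 - δ) * roughMax (2*a) δ Ω f x := by
    intro δ k
    calc S k = t k ^ (1-δ) * (t k ^ (δ-1) * S k) := by
          rw [← mul_assoc, ← ENNReal.rpow_add _ _ (ht0 k) (httop k)]
          rw [show (1-δ) + (δ-1) = 0 from by ring, ENNReal.rpow_zero, one_mul]
      _ ≤ t k ^ (1-δ) * roughMax (2*a) δ Ω f x := mul_le_mul_right (hmax δ k) _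
  set A : ℕ → Set (Euc d) := fun k => ball x (r k) \ ball x (r (k+1)) with hA_def
  set h : Euc d → ℝ≥0∞ := fun y => F y * gaussMeasure d (ball x ‖x - y‖) ^ (β - 1) with hh_def
  -- step 1 : reduce to the lintegral of h
  have step1 : ENNReal.ofReal |roughIfrac a β Ω f x| ≤
      ∫⁻ y in ball x R, h y ∂gaussMeasure d := by
    have h0 : ‖roughIfrac a β Ω f x‖ ≤ (∫⁻ y in ball x R,
        ENNReal.ofReal ‖Ω (x - y) * f y * ((gaussMeasure d (ball x ‖x - y‖)).toReal) ^ (β - 1)‖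
          ∂gaussMeasure d).toReal := by
      unfold roughIfrac
      rw [← hR_def]
      exact norm_integral_le_lintegral_norm _
    have h1 : ENNReal.ofReal |roughIfrac a β Ω f x| ≤ ∫⁻ y in ball x R,
        ENNReal.ofReal ‖Ω (x - y) * f y * ((gaussMeasure d (ball x ‖x - y‖)).toReal) ^ (β - 1)‖
          ∂gaussMeasure d := by
      rw [← Real.norm_eq_abs]
      exact le_trans (ENNReal.ofReal_le_ofReal h0) ENNReal.ofReal_toReal_le
    refine le_trans h1 ?_
    apply setLIntegral_mono' measurableSet_ball
    intro y hy
    have habs : ‖Ω (x - y) * f y * ((gaussMeasure d (ball x ‖x - y‖)).toReal) ^ (β - 1)‖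
        = |Ω (x-y)| * |f y| * ((gaussMeasure d (ball x ‖x - y‖)).toReal) ^ (β-1) := by
      rw [Real.norm_eq_abs, abs_mul, abs_mul,
        abs_of_nonneg (Real.rpow_nonneg ENNReal.toReal_nonneg _)]
    rw [habs, ENNReal.ofReal_mul (mul_nonneg (abs_nonneg _) (abs_nonneg _)),
      ENNReal.ofReal_mul (abs_nonneg _)]
    rcases eq_or_ne (gaussMeasure d (ball x ‖x - y‖)) 0 with hT0 | hT0
    · rw [hT0]
      rw [show ((0:ℝ≥0∞)).toReal = 0 from rfl, Real.zero_rpow (by linarith : β - 1 ≠ 0)]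
      simp only [ENNReal.ofReal_zero, mul_zero]
      exact zero_le
    · have hTtop : gaussMeasure d (ball x ‖x - y‖) ≠ ⊤ := by
        have hxy : ‖x - y‖ < R := by
          rw [← dist_eq_norm, dist_comm]
          exact mem_ball.1 hy
        have hle : gaussMeasure d (ball x ‖x - y‖) ≤ gaussMeasure d (ball x R) :=
          measure_mono (ball_subset_ball hxy.le)
        exact (lt_of_le_of_lt hle
          (lt_of_le_of_lt (hcomp x R hR hR2).2 ENNReal.ofReal_lt_top)).ne
      have heq : ENNReal.ofReal ((gaussMeasure d (ball x ‖x - y‖)).toReal ^ (β-1))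
          = gaussMeasure d (ball x ‖x - y‖) ^ (β-1) := by
        rw [ENNReal.toReal_rpow, ENNReal.ofReal_toReal]
        intro hcon
        rcases ENNReal.rpow_eq_top_iff.1 hcon with ⟨h1', _⟩ | ⟨h1', _⟩
        exacts [hT0 h1', hTtop h1']
      rw [heq]
  -- step 2 : decompose into annuli
  have hcover : ball x R \ {x} ⊆ ⋃ k, A k := by
    rintro y ⟨hyball, hyx⟩
    simp only [mem_iUnion]
    have hyx' : y ≠ x := by simpa using hyx
    have hD : 0 < dist y x := dist_pos.2 hyx'
    have hDR : dist y x < R := mem_ball.1 hyball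
    have hq' : 1 < R / dist y x := (one_lt_div hD).2 hDR
    have hq'0 : 0 < R / dist y x := lt_trans one_pos hq'
    set n := ⌈Real.logb 2 (R / dist y x)⌉₊ with hn_def
    have hn1 : 1 ≤ n := by
      rw [hn_def]
      exact Nat.one_le_iff_ne_zero.2 (Nat.ceil_pos.2 (Real.logb_pos one_lt_two hq')).ne'
    refine ⟨n - 1, ?_, ?_⟩
    · show y ∈ ball x (r (n-1))
      have hlt : ((n - 1 : ℕ) : ℝ) < Real.logb 2 (R / dist y x) :=
        Nat.lt_ceil.1 (by omega)
      have h2 : ((2:ℝ)) ^ (n-1) < R / dist y x := by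
        have := Real.rpow_lt_rpow_of_exponent_lt one_lt_two hlt
        rwa [Real.rpow_logb two_pos (by norm_num) hq'0, Real.rpow_natCast] at this
      rw [mem_ball]
      simp only [hr_def]
      rw [lt_div_iff₀ (by positivity)]
      rw [lt_div_iff₀ hD] at h2
      linarith
    · show y ∉ ball x (r (n-1+1))
      have hnn : n - 1 + 1 = n := by omega
      rw [hnn]
      have h3 : R / dist y x ≤ (2:ℝ) ^ n := by
        have := Real.rpow_le_rpow_of_exponent_le one_le_two (Nat.le_ceil (Real.logb 2 (R / dist y x)))
        rwa [Real.rpow_logb two_pos (by norm_num) hq'0, Real.rpow_natCast] at this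
      rw [mem_ball, not_lt]
      simp only [hr_def]
      rw [div_le_iff₀ (by positivity)]
      rw [div_le_iff₀ hD] at h3
      linarith
  have hxnull : gaussMeasure d {x} = 0 := by
    simp only [gaussMeasure]
    rw [withDensity_apply _ (measurableSet_singleton x)]
    exact setLIntegral_measure_zero _ _ (measure_singleton x)
  have step2 : ∫⁻ y in ball x R, h y ∂gaussMeasure d ≤
      ∑' k, ∫⁻ y in A k, h y ∂gaussMeasure d := by
    calc ∫⁻ y in ball x R, h y ∂gaussMeasure d
        ≤ ∫⁻ y in (ball x R \ {x}) ∪ {x}, h y ∂gaussMeasure d :=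
          lintegral_mono_set (subset_diff_union _ _)
      _ ≤ (∫⁻ y in ball x R \ {x}, h y ∂gaussMeasure d) + ∫⁻ y in {x}, h y ∂gaussMeasure d :=
          lintegral_union_le _ _ _
      _ ≤ (∑' k, ∫⁻ y in A k, h y ∂gaussMeasure d) + 0 := by
          apply add_le_add
          · exact le_trans (lintegral_mono_set hcover) (lintegral_iUnion_le _ _)
          · exact le_of_eq (setLIntegral_measure_zero _ _ hxnull)
      _ = ∑' k, ∫⁻ y in A k, h y ∂gaussMeasure d := add_zero _
  -- step 3 : annulus estimate
  have step3 : ∀ k, ∫⁻ y in A k, h y ∂gaussMeasure d ≤ t (k+1) ^ (β-1) * S k := by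
    intro k
    have hpt : ∀ y ∈ A k, h y ≤ t (k+1) ^ (β-1) * F y := by
      intro y hy
      obtain ⟨hy1, hy2⟩ := hy
      have hge : r (k+1) ≤ ‖x - y‖ := by
        have hnlt : ¬ dist y x < r (k+1) := fun hc => hy2 (mem_ball.2 hc)
        rw [← dist_eq_norm, dist_comm]
        exact not_lt.1 hnlt
      have hmono : t (k+1) ≤ gaussMeasure d (ball x ‖x - y‖) :=
        measure_mono (ball_subset_ball hge)
      have hr' := my_rpow_antitone hmono (by linarith : β - 1 ≤ 0)
      calc h y = F y * gaussMeasure d (ball x ‖x - y‖) ^ (β - 1) := by simp only [hh_def]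
        _ ≤ F y * t (k+1) ^ (β-1) := mul_le_mul_right hr' _
        _ = t (k+1) ^ (β-1) * F y := mul_comm _ _
    calc ∫⁻ y in A k, h y ∂gaussMeasure d
        ≤ ∫⁻ y in A k, t (k+1) ^ (β-1) * F y ∂gaussMeasure d :=
          setLIntegral_mono' (measurableSet_ball.diff measurableSet_ball) hpt
      _ = t (k+1) ^ (β-1) * ∫⁻ y in A k, F y ∂gaussMeasure d :=
          lintegral_const_mul' _ _ (htne (k+1))
      _ ≤ t (k+1) ^ (β-1) * S k := by
          apply mul_le_mul_right
          simp only [hS_def]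
          exact lintegral_mono_set diff_subset
  -- w sequence
  set w : ℕ → ℝ := fun k => r k ^ d * E with hw_def
  have hw0 : ∀ k, 0 < w k := fun k => mul_pos (pow_pos (hrpos k) d) hE
  have hterm : ∀ (δ : ℝ), 0 ≤ 1 - δ → ∀ k,
      t (k+1) ^ (β-1) * (t k ^ (1-δ) * roughMax (2*a) δ Ω f x)
      ≤ ENNReal.ofReal ((c₁^(β-1) * q^(β-1) * c₂^(1-δ)) * w k ^ (β-δ))
          * roughMax (2*a) δ Ω f x := by
    intro δ hδ k
    have hrq : r (k+1) ^ d = q * r k ^ d := by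
      rw [hrsucc k, div_pow, hq_def, inv_pow, div_eq_mul_inv, mul_comm]
    have e : c₁ * r (k+1) ^ d * E = c₁ * q * w k := by
      rw [hrq]; simp only [hw_def]; ring
    have h1 : t (k+1) ^ (β-1) ≤ ENNReal.ofReal ((c₁ * q * w k) ^ (β-1)) := by
      calc t (k+1) ^ (β-1) ≤ (ENNReal.ofReal (c₁ * r (k+1) ^ d * E)) ^ (β-1) :=
            my_rpow_antitone (htlo (k+1)) (by linarith)
        _ = ENNReal.ofReal ((c₁ * r (k+1) ^ d * E) ^ (β-1)) :=
            ENNReal.ofReal_rpow_of_pos (mul_pos (mul_pos hc₁ (pow_pos (hrpos _) d)) hE)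
        _ = ENNReal.ofReal ((c₁ * q * w k) ^ (β-1)) := by rw [e]
    have e2 : c₂ * r k ^ d * E = c₂ * w k := by simp only [hw_def]; ring
    have h2 : t k ^ (1-δ) ≤ ENNReal.ofReal ((c₂ * w k) ^ (1-δ)) := by
      calc t k ^ (1-δ) ≤ (ENNReal.ofReal (c₂ * r k ^ d * E)) ^ (1-δ) :=
            ENNReal.rpow_le_rpow (hthi k) hδ
        _ = ENNReal.ofReal ((c₂ * r k ^ d * E) ^ (1-δ)) :=
            ENNReal.ofReal_rpow_of_pos (mul_pos (mul_pos hc₂ (pow_pos (hrpos k) d)) hE)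
        _ = ENNReal.ofReal ((c₂ * w k) ^ (1-δ)) := by rw [e2]
    have hreal : (c₁ * q * w k) ^ (β-1) * (c₂ * w k) ^ (1-δ)
        = (c₁^(β-1) * q^(β-1) * c₂^(1-δ)) * w k ^ (β-δ) := by
      rw [Real.mul_rpow (mul_pos hc₁ hq0).le (hw0 k).le,
        Real.mul_rpow hc₁.le hq0.le, Real.mul_rpow hc₂.le (hw0 k).le]
      have hww : w k ^ (β-1) * w k ^ (1-δ) = w k ^ (β-δ) := by
        rw [← Real.rpow_add (hw0 k)]
        congr 1
        ring
      calc c₁^(β-1) * q^(β-1) * w k^(β-1) * (c₂^(1-δ) * w k^(1-δ))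
          = c₁^(β-1) * q^(β-1) * c₂^(1-δ) * (w k^(β-1) * w k^(1-δ)) := by ring
        _ = (c₁^(β-1) * q^(β-1) * c₂^(1-δ)) * w k ^ (β-δ) := by rw [hww]
    calc t (k+1) ^ (β-1) * (t k ^ (1-δ) * roughMax (2*a) δ Ω f x)
        ≤ ENNReal.ofReal ((c₁ * q * w k) ^ (β-1))
            * (ENNReal.ofReal ((c₂ * w k) ^ (1-δ)) * roughMax (2*a) δ Ω f x) :=
          mul_le_mul' h1 (mul_le_mul_left h2 _)
      _ = ENNReal.ofReal ((c₁ * q * w k) ^ (β-1) * (c₂ * w k) ^ (1-δ))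
            * roughMax (2*a) δ Ω f x := by
          rw [← mul_assoc, ← ENNReal.ofReal_mul (Real.rpow_nonneg
            (mul_pos (mul_pos hc₁ hq0) (hw0 k)).le _)]
      _ = ENNReal.ofReal ((c₁^(β-1) * q^(β-1) * c₂^(1-δ)) * w k ^ (β-δ))
            * roughMax (2*a) δ Ω f x := by rw [hreal]
  set Mp : ℝ≥0∞ := roughMax (2*a) (β+ε) Ω f x with hMp_def
  set Mm : ℝ≥0∞ := roughMax (2*a) (β-ε) Ω f x with hMm_def
  have htermp : ∀ k, ∫⁻ y in A k, h y ∂gaussMeasure d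
      ≤ ENNReal.ofReal G * (ENNReal.ofReal (w k ^ (-ε)) * Mp) := by
    intro k
    refine le_trans (step3 k) (le_trans (mul_le_mul_right (hSle (β+ε) k) _) ?_)
    refine le_trans (hterm (β+ε) (by linarith) k) ?_
    rw [show β - (β+ε) = -ε from by ring]
    rw [show ENNReal.ofReal G * (ENNReal.ofReal (w k ^ (-ε)) * Mp)
      = (ENNReal.ofReal G * ENNReal.ofReal (w k ^ (-ε))) * Mp from by ring,
      ← ENNReal.ofReal_mul hG0.le]
    apply mul_le_mul_left
    apply ENNReal.ofReal_le_ofReal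
    exact mul_le_mul_of_nonneg_right (le_max_left _ _) (Real.rpow_nonneg (hw0 k).le _)
  have htermm : ∀ k, ∫⁻ y in A k, h y ∂gaussMeasure d
      ≤ ENNReal.ofReal G * (ENNReal.ofReal (w k ^ ε) * Mm) := by
    intro k
    refine le_trans (step3 k) (le_trans (mul_le_mul_right (hSle (β-ε) k) _) ?_)
    refine le_trans (hterm (β-ε) (by linarith) k) ?_
    rw [show β - (β-ε) = ε from by ring]
    rw [show ENNReal.ofReal G * (ENNReal.ofReal (w k ^ ε) * Mm)
      = (ENNReal.ofReal G * ENNReal.ofReal (w k ^ ε)) * Mm from by ring,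
      ← ENNReal.ofReal_mul hG0.le]
    apply mul_le_mul_left
    apply ENNReal.ofReal_le_ofReal
    exact mul_le_mul_of_nonneg_right (le_max_right _ _) (Real.rpow_nonneg (hw0 k).le _)
  -- now case analysis
  rcases eq_or_ne Mp 0 with hMp0 | hMp0
  · -- Mp = 0 : everything is zero
    have hL0 : ∫⁻ y in ball x R, h y ∂gaussMeasure d = 0 := by
      refine le_antisymm (le_trans step2 ?_) (zero_le)
      have : ∀ k, ∫⁻ y in A k, h y ∂gaussMeasure d = 0 := by
        intro k
        refine le_antisymm (le_trans (htermp k) ?_) (zero_le)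
        rw [hMp0, mul_zero, mul_zero]
      simp only [this, tsum_zero, le_refl]
    rw [le_antisymm (le_trans step1 (le_of_eq hL0)) (zero_le)]
    exact zero_le
  rcases eq_or_ne Mm 0 with hMm0 | hMm0
  · have hL0 : ∫⁻ y in ball x R, h y ∂gaussMeasure d = 0 := by
      refine le_antisymm (le_trans step2 ?_) (zero_le)
      have : ∀ k, ∫⁻ y in A k, h y ∂gaussMeasure d = 0 := by
        intro k
        refine le_antisymm (le_trans (htermm k) ?_) (zero_le)
        rw [hMm0, mul_zero, mul_zero]
      simp only [this, tsum_zero, le_refl]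
    rw [le_antisymm (le_trans step1 (le_of_eq hL0)) (zero_le)]
    exact zero_le
  rcases eq_or_ne Mp ⊤ with hMptop | hMptop
  · have : C * Mp ^ ((1:ℝ)/2) * Mm ^ ((1:ℝ)/2) = ⊤ := by
      rw [hMptop, ENNReal.top_rpow_of_pos (by norm_num), ENNReal.mul_top hC0]
      rw [ENNReal.top_mul]
      intro hcon
      rcases ENNReal.rpow_eq_zero_iff.1 hcon with ⟨h1, _⟩ | ⟨_, h2⟩
      · exact hMm0 h1
      · norm_num at h2
    rw [this]
    exact le_top
  rcases eq_or_ne Mm ⊤ with hMmtop | hMmtop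
  · have : C * Mp ^ ((1:ℝ)/2) * Mm ^ ((1:ℝ)/2) = ⊤ := by
      rw [hMmtop, ENNReal.top_rpow_of_pos (by norm_num)]
      rw [ENNReal.mul_top]
      intro hcon
      rcases mul_eq_zero.1 hcon with h1 | h2
      · exact hC0 h1
      · rcases ENNReal.rpow_eq_zero_iff.1 h2 with ⟨h1, _⟩ | ⟨_, h3⟩
        · exact hMp0 h1
        · norm_num at h3
    rw [this]
    exact le_top
  -- main case : both finite and nonzero
  set mp : ℝ := Mp.toReal with hmp_def
  set mm : ℝ := Mm.toReal with hmm_def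
  have hmp : 0 < mp := ENNReal.toReal_pos hMp0 hMptop
  have hmm : 0 < mm := ENNReal.toReal_pos hMm0 hMmtop
  have hMp_eq : Mp = ENNReal.ofReal mp := (ENNReal.ofReal_toReal hMptop).symm
  have hMm_eq : Mm = ENNReal.ofReal mm := (ENNReal.ofReal_toReal hMmtop).symm
  set w0 : ℝ := R ^ d * E with hw0_def
  have hw00 : 0 < w0 := mul_pos (pow_pos hR d) hE
  have hwk : ∀ k, w k = w0 * q ^ k := by
    intro k
    simp only [hw_def, hw0_def, hr_def, hq_def]
    rw [div_pow, div_eq_mul_inv, ← pow_right_comm, ← inv_pow, ← inv_pow]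
    ring
  have hqkε : ∀ k : ℕ, ((q:ℝ) ^ k) ^ ε = p ^ k := by
    intro k
    rw [hp_def, ← Real.rpow_natCast q k, ← Real.rpow_natCast (q ^ ε) k,
      ← Real.rpow_mul hq0.le, ← Real.rpow_mul hq0.le, mul_comm]
  have hwkε : ∀ k, w k ^ ε = w0 ^ ε * p ^ k := by
    intro k
    rw [hwk k, Real.mul_rpow hw00.le (pow_nonneg hq0.le k), hqkε k]
  have hwkmε : ∀ k, w k ^ (-ε) = w0 ^ (-ε) * (p ^ k)⁻¹ := by
    intro k
    rw [hwk k, Real.mul_rpow hw00.le (pow_nonneg hq0.le k),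
      Real.rpow_neg (pow_nonneg hq0.le k), hqkε k]
  set A' : ℝ := w0 ^ (-ε) * mp with hA'_def
  set B' : ℝ := w0 ^ ε * mm with hB'_def
  have hA'0 : 0 < A' := mul_pos (Real.rpow_pos_of_pos hw00 _) hmp
  have hB'0 : 0 < B' := mul_pos (Real.rpow_pos_of_pos hw00 _) hmm
  obtain ⟨n, hn⟩ := my_per_k p A' B' hp0 hp1 hA'0 hB'0
  have hABprod : A' * B' = mp * mm := by
    have hww : w0 ^ (-ε) * w0 ^ ε = 1 := by
      rw [← Real.rpow_add hw00]
      norm_num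
    calc A' * B' = (w0 ^ (-ε) * w0 ^ ε) * (mp * mm) := by rw [hA'_def, hB'_def]; ring
      _ = mp * mm := by rw [hww, one_mul]
  have htermk : ∀ k, ∫⁻ y in A k, h y ∂gaussMeasure d
      ≤ ENNReal.ofReal G * (ENNReal.ofReal (p⁻¹ * Real.sqrt (mp * mm)) * P ^ (Nat.dist n k)) := by
    intro k
    have hXk : ENNReal.ofReal (w k ^ (-ε)) * Mp = ENNReal.ofReal (A' * (p ^ k)⁻¹) := by
      rw [hMp_eq, ← ENNReal.ofReal_mul (Real.rpow_nonneg (hw0 k).le _), hwkmε k, hA'_def]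
      congr 1
      ring
    have hYk : ENNReal.ofReal (w k ^ ε) * Mm = ENNReal.ofReal (B' * p ^ k) := by
      rw [hMm_eq, ← ENNReal.ofReal_mul (Real.rpow_nonneg (hw0 k).le _), hwkε k, hB'_def]
      congr 1
      ring
    have hfinal : ENNReal.ofReal (min (A' * (p ^ k)⁻¹) (B' * p ^ k))
        ≤ ENNReal.ofReal (p⁻¹ * Real.sqrt (mp * mm)) * P ^ (Nat.dist n k) := by
      rw [hP_def, ← ENNReal.ofReal_pow hp0.le, ← ENNReal.ofReal_mul (by positivity)]
      apply ENNReal.ofReal_le_ofReal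
      have := hn k
      rwa [hABprod] at this
    rcases le_total (A' * (p ^ k)⁻¹) (B' * p ^ k) with hc | hc
    · refine le_trans (htermp k) ?_
      apply mul_le_mul_right
      rw [hXk]
      refine le_trans ?_ hfinal
      apply ENNReal.ofReal_le_ofReal
      rw [min_eq_left hc]
    · refine le_trans (htermm k) ?_
      apply mul_le_mul_right
      rw [hYk]
      refine le_trans ?_ hfinal
      apply ENNReal.ofReal_le_ofReal
      rw [min_eq_right hc]
  -- sum up
  have hsum : ∫⁻ y in ball x R, h y ∂gaussMeasure d
      ≤ ENNReal.ofReal G * (ENNReal.ofReal (p⁻¹ * Real.sqrt (mp * mm)) * (2 * (1 - P)⁻¹)) := by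
    refine le_trans step2 ?_
    calc ∑' k, ∫⁻ y in A k, h y ∂gaussMeasure d
        ≤ ∑' k, ENNReal.ofReal G * (ENNReal.ofReal (p⁻¹ * Real.sqrt (mp * mm))
            * P ^ (Nat.dist n k)) := ENNReal.tsum_le_tsum htermk
      _ = ENNReal.ofReal G * (ENNReal.ofReal (p⁻¹ * Real.sqrt (mp * mm))
            * ∑' k, P ^ (Nat.dist n k)) := by
          rw [ENNReal.tsum_mul_left, ENNReal.tsum_mul_left]
      _ ≤ ENNReal.ofReal G * (ENNReal.ofReal (p⁻¹ * Real.sqrt (mp * mm)) * (2 * (1 - P)⁻¹)) := by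
          apply mul_le_mul_right
          apply mul_le_mul_right
          exact my_tsum_pow_dist P (by rw [hP_def]; exact ENNReal.ofReal_le_one.2 hp1.le) n
  refine le_trans step1 (le_trans hsum (le_of_eq ?_))
  -- identify the constant
  have hsqrt : ENNReal.ofReal (Real.sqrt (mp * mm)) = Mp ^ ((1:ℝ)/2) * Mm ^ ((1:ℝ)/2) := by
    rw [Real.sqrt_mul hmp.le, ENNReal.ofReal_mul (Real.sqrt_nonneg _),
      Real.sqrt_eq_rpow, Real.sqrt_eq_rpow, hMp_eq, hMm_eq,
      ENNReal.ofReal_rpow_of_pos hmp, ENNReal.ofReal_rpow_of_pos hmm]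
  rw [hC_def, ENNReal.ofReal_mul (inv_pos.2 hp0).le, hsqrt]
  ring
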